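/- Define g(x) = (x+1) log₂(x+1) − x log₂ x for x > 0 (with g(0) = 0). For fixed η ∈ [0,1] and N > 0, the function F(η₁) = g((η + (1−η)η₁)N) + g((η + (1−η)(1−η₁))N) − g((1−η)η₁ N) − g((1−η)(1−η₁)N) is convex in η₁ on (0,1). -/

import Mathlib

/-- Entropy of a thermal bosonic state with mean photon number x (in bits),
g(x) = (x+1)log₂(x+1) − x log₂ x. -/
noncomputable def g (x : ℝ) : ℝ := (x + 1) * Real.logb 2 (x + 1) - x * Real.logb 2 x

/-- The squashed-entanglement objective for the pure-loss channel with squashing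
beamsplitter of transmissivity η₁. -/
noncomputable def Fobj (η N η₁ : ℝ) : ℝ :=
  g ((η + (1 - η) * η₁) * N) + g ((η + (1 - η) * (1 - η₁)) * N)
    - g ((1 - η) * η₁ * N) - g ((1 - η) * (1 - η₁) * N)

noncomputable def phi (x : ℝ) : ℝ := (x + 1) * Real.log (x + 1) - x * Real.log x

lemma hasDerivAt_phi {x : ℝ} (hx : 0 < x) :
    HasDerivAt phi (Real.log (x + 1) - Real.log x) x := by
  have h1 : HasDerivAt (fun y : ℝ => y + 1) 1 x := (hasDerivAt_id x).add_const 1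
  have h2 := (Real.hasDerivAt_mul_log (by linarith : x + 1 ≠ 0)).comp x h1
  have h3 := Real.hasDerivAt_mul_log hx.ne'
  have := h2.fun_sub h3
  simp only [Function.comp] at this
  refine this.congr_deriv ?_
  ring

lemma hasDerivAt_phi' {x : ℝ} (hx : 0 < x) :
    HasDerivAt (fun x => Real.log (x + 1) - Real.log x) (1/(x+1) - 1/x) x := by
  have h1 : HasDerivAt (fun y : ℝ => y + 1) 1 x := (hasDerivAt_id x).add_const 1
  have h2 := (Real.hasDerivAt_log (by linarith : x + 1 ≠ 0)).comp x h1
  have h3 := Real.hasDerivAt_log hx.ne'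
  have := h2.fun_sub h3
  simp only [Function.comp] at this
  refine this.congr_deriv ?_
  field_simp

lemma key {x y : ℝ} (hx : 0 < x) (hxy : x ≤ y) :
    1/(x+1) - 1/x ≤ 1/(y+1) - 1/y := by
  have hy : 0 < y := hx.trans_le hxy
  have h1 : 1/(x+1) - 1/x = -(1/(x*(x+1))) := by field_simp; ring
  have h2 : 1/(y+1) - 1/y = -(1/(y*(y+1))) := by field_simp; ring
  rw [h1, h2, neg_le_neg_iff]
  exact one_div_le_one_div_of_le (by positivity)
    (mul_le_mul hxy (by linarith) (by linarith) hy.le)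

lemma F0_convex {c a : ℝ} (hc : 0 ≤ c) (ha : 0 < a) :
    ConvexOn ℝ (Set.Ioo (0:ℝ) 1)
      (fun t => phi (c + a*t) + phi (c + a*(1-t)) - phi (a*t) - phi (a*(1-t))) := by
  have hint : interior (Set.Ioo (0:ℝ) 1) = Set.Ioo (0:ℝ) 1 := isOpen_Ioo.interior_eq
  set φ' : ℝ → ℝ := fun x => Real.log (x + 1) - Real.log x with hφ'
  set φ'' : ℝ → ℝ := fun x => 1/(x+1) - 1/x with hφ''
  set F1 : ℝ → ℝ := fun t => a * φ' (c + a*t) + (-a) * φ' (c + a*(1-t))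
      - a * φ' (a*t) - (-a) * φ' (a*(1-t)) with hF1
  -- positivity of arguments
  have args : ∀ t ∈ Set.Ioo (0:ℝ) 1,
      0 < a*t ∧ 0 < a*(1-t) ∧ 0 < c + a*t ∧ 0 < c + a*(1-t) := by
    intro t ht
    obtain ⟨ht0, ht1⟩ := ht
    have h1 : 0 < a*t := mul_pos ha ht0
    have h2 : 0 < a*(1-t) := mul_pos ha (by linarith)
    exact ⟨h1, h2, by linarith, by linarith⟩
  have du : ∀ t : ℝ, HasDerivAt (fun t : ℝ => c + a*t) a t := by
    intro t
    simpa using ((hasDerivAt_id t).const_mul a).const_add c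
  have dv : ∀ t : ℝ, HasDerivAt (fun t : ℝ => c + a*(1-t)) (-a) t := by
    intro t
    have : HasDerivAt (fun t : ℝ => 1 - t) (-1) t := by
      simpa using (hasDerivAt_id t).const_sub 1
    simpa using ((this.const_mul a).const_add c)
  have du0 : ∀ t : ℝ, HasDerivAt (fun t : ℝ => a*t) a t := by
    intro t; simpa using ((hasDerivAt_id t).const_mul a)
  have dv0 : ∀ t : ℝ, HasDerivAt (fun t : ℝ => a*(1-t)) (-a) t := by
    intro t
    have : HasDerivAt (fun t : ℝ => 1 - t) (-1) t := by
      simpa using (hasDerivAt_id t).const_sub 1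
    simpa using (this.const_mul a)
  have hD1 : ∀ t ∈ Set.Ioo (0:ℝ) 1,
      HasDerivAt (fun t => phi (c + a*t) + phi (c + a*(1-t)) - phi (a*t) - phi (a*(1-t)))
        (F1 t) t := by
    intro t ht
    obtain ⟨h1, h2, h3, h4⟩ := args t ht
    have d1 := (hasDerivAt_phi h3).comp t (du t)
    have d2 := (hasDerivAt_phi h4).comp t (dv t)
    have d3 := (hasDerivAt_phi h1).comp t (du0 t)
    have d4 := (hasDerivAt_phi h2).comp t (dv0 t)
    have := ((d1.fun_add d2).fun_sub d3).fun_sub d4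
    simp only [Function.comp] at this
    refine this.congr_deriv ?_
    simp only [hF1, hφ']
    ring
  have hD2 : ∀ t ∈ Set.Ioo (0:ℝ) 1,
      HasDerivAt F1
        (a*a*φ'' (c + a*t) + a*a*φ'' (c + a*(1-t)) - a*a*φ'' (a*t) - a*a*φ'' (a*(1-t))) t := by
    intro t ht
    obtain ⟨h1, h2, h3, h4⟩ := args t ht
    have d1 := ((hasDerivAt_phi' h3).comp t (du t)).const_mul a
    have d2 := ((hasDerivAt_phi' h4).comp t (dv t)).const_mul (-a)
    have d3 := ((hasDerivAt_phi' h1).comp t (du0 t)).const_mul a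
    have d4 := ((hasDerivAt_phi' h2).comp t (dv0 t)).const_mul (-a)
    have := ((d1.fun_add d2).fun_sub d3).fun_sub d4
    simp only [Function.comp] at this
    refine this.congr_deriv ?_
    simp only [hφ'']
    ring
  refine convexOn_of_hasDerivWithinAt2_nonneg (f' := F1)
    (f'' := fun t => a*a*φ'' (c + a*t) + a*a*φ'' (c + a*(1-t)) - a*a*φ'' (a*t) - a*a*φ'' (a*(1-t)))
    (convex_Ioo 0 1) ?_ ?_ ?_ ?_
  · intro t ht
    exact (hD1 t ht).continuousAt.continuousWithinAt
  · intro t ht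
    rw [hint] at ht
    exact (hD1 t ht).hasDerivWithinAt
  · intro t ht
    rw [hint] at ht
    exact (hD2 t ht).hasDerivWithinAt
  · intro t ht
    rw [hint] at ht
    obtain ⟨h1, h2, h3, h4⟩ := args t ht
    have k1 : φ'' (a*t) ≤ φ'' (c + a*t) := key h1 (by linarith)
    have k2 : φ'' (a*(1-t)) ≤ φ'' (c + a*(1-t)) := key h2 (by linarith)
    have m1 := mul_le_mul_of_nonneg_left k1 (mul_pos ha ha).le
    have m2 := mul_le_mul_of_nonneg_left k2 (mul_pos ha ha).le
    linarith

/-- **Convexity in η₁** of the bosonic squashed-entanglement bound. -/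
theorem Fobj_convex (η N : ℝ) (hη : η ∈ Set.Icc (0 : ℝ) 1) (hN : 0 < N) :
    ConvexOn ℝ (Set.Ioo (0 : ℝ) 1) (fun η₁ => Fobj η N η₁) := by
  obtain ⟨hη0, hη1⟩ := hη
  set c := η * N with hc
  set a := (1 - η) * N with ha
  have hc0 : 0 ≤ c := mul_nonneg hη0 hN.le
  have hlog2 : (0:ℝ) < Real.log 2 := Real.log_pos (by norm_num)
  have hgφ : ∀ x : ℝ, g x = (1 / Real.log 2) * phi x := by
    intro x
    simp only [g, phi, Real.logb]
    ring
  have hFeq : (fun η₁ => Fobj η N η₁)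
      = fun t => (1 / Real.log 2) •
        (phi (c + a*t) + phi (c + a*(1-t)) - phi (a*t) - phi (a*(1-t))) := by
    funext t
    simp only [Fobj, hgφ, smul_eq_mul]
    have e1 : (η + (1 - η) * t) * N = c + a*t := by rw [hc, ha]; ring
    have e2 : (η + (1 - η) * (1 - t)) * N = c + a*(1-t) := by rw [hc, ha]; ring
    have e3 : (1 - η) * t * N = a*t := by rw [ha]; ring
    have e4 : (1 - η) * (1 - t) * N = a*(1-t) := by rw [ha]; ring
    rw [e1, e2, e3, e4]
    ring
  rw [hFeq]
  rcases eq_or_lt_of_le hη1 with heq | hlt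
  · have ha0 : a = 0 := by rw [ha, ← heq]; ring
    have : (fun t : ℝ => (1 / Real.log 2) •
        (phi (c + a*t) + phi (c + a*(1-t)) - phi (a*t) - phi (a*(1-t))))
        = fun _ : ℝ => (1 / Real.log 2) • (phi c + phi c - phi 0 - phi 0) := by
      funext t; rw [ha0]; ring_nf
    rw [this]
    exact convexOn_const _ (convex_Ioo 0 1)
  · have ha' : 0 < a := mul_pos (by linarith) hN
    exact (F0_convex hc0 ha').smul (by positivity)
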